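/- For every policy π : S → A, if V_π ∈ ℝ^S is a fixed point of the map v ↦ F̲(v,π) (i.e., F̲(V_π,π) = V_π) and V*_p ∈ ℝ^S is a fixed point of G̲ (i.e., G̲(V*_p) = V*_p), then V_π(s) ≤ V*_p(s) for all s ∈ S. -/
import Mathlib


/-- The ambiguity set `Δ_{s,a}` of transition probability vectors compatible with the
interval bounds `Plow`, `Pup` at state `s` and action `a`. -/
def ambiguitySet {S A : Type*} [Fintype S] (Plow Pup : S → S → A → ℝ) (s : S) (a : A) :
    Set (S → ℝ) :=
  {p | (∀ s', 0 ≤ p s' ∧ p s' ≤ 1 ∧ Plow s' s a ≤ p s' ∧ p s' ≤ Pup s' s a) ∧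
    ∑ s', p s' = 1}

/-- `min_{p ∈ Δ_{s,a}} ∑_{s' ∈ S} p(s') v(s')`. -/
noncomputable def minExp {S A : Type*} [Fintype S] (Plow Pup : S → S → A → ℝ)
    (s : S) (a : A) (v : S → ℝ) : ℝ :=
  sInf ((fun p : S → ℝ => ∑ s', p s' * v s') '' ambiguitySet Plow Pup s a)

/-- `max_{p ∈ Δ_{s,a}} ∑_{s' ∈ S} p(s') v(s')`. -/
noncomputable def maxExp {S A : Type*} [Fintype S] (Plow Pup : S → S → A → ℝ)
    (s : S) (a : A) (v : S → ℝ) : ℝ :=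
  sSup ((fun p : S → ℝ => ∑ s', p s' * v s') '' ambiguitySet Plow Pup s a)

/-- The pessimistic Bellman-policy operator
`F̲(v,π)(s) = R̲(s,π(s)) + γ · min_{p ∈ Δ_{s,π(s)}} ∑_{s'} p(s') v(s')`. -/
noncomputable def Fpess {S A : Type*} [Fintype S] (Plow Pup : S → S → A → ℝ)
    (Rlow : S → A → ℝ) (γ : ℝ) (v : S → ℝ) (π : S → A) (s : S) : ℝ :=
  Rlow s (π s) + γ * minExp Plow Pup s (π s) v

/-- The optimistic Bellman-policy operator
`F̄(v,π)(s) = R̄(s,π(s)) + γ · max_{p ∈ Δ_{s,π(s)}} ∑_{s'} p(s') v(s')`. -/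
noncomputable def Fopt {S A : Type*} [Fintype S] (Plow Pup : S → S → A → ℝ)
    (Rup : S → A → ℝ) (γ : ℝ) (v : S → ℝ) (π : S → A) (s : S) : ℝ :=
  Rup s (π s) + γ * maxExp Plow Pup s (π s) v

/-- The pessimistic interval Bellman operator
`G̲(v)(s) = sup_{a ∈ A} [ R̲(s,a) + γ · min_{p ∈ Δ_{s,a}} ∑_{s'} p(s') v(s') ]`. -/
noncomputable def Gpess {S A : Type*} [Fintype S] (Plow Pup : S → S → A → ℝ)
    (Rlow : S → A → ℝ) (γ : ℝ) (v : S → ℝ) (s : S) : ℝ :=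
  ⨆ a : A, (Rlow s a + γ * minExp Plow Pup s a v)

/-- The optimistic interval Bellman operator
`Ḡ(v)(s) = sup_{a ∈ A} [ R̄(s,a) + γ · max_{p ∈ Δ_{s,a}} ∑_{s'} p(s') v(s') ]`. -/
noncomputable def Gopt {S A : Type*} [Fintype S] (Plow Pup : S → S → A → ℝ)
    (Rup : S → A → ℝ) (γ : ℝ) (v : S → ℝ) (s : S) : ℝ :=
  ⨆ a : A, (Rup s a + γ * maxExp Plow Pup s a v)

open Finset

lemma amb_nonempty {S A : Type*} [Fintype S] [Nonempty S] (Plow Pup : S → S → A → ℝ)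
    (hP01 : ∀ s' s a, 0 ≤ Plow s' s a ∧ Pup s' s a ≤ 1)
    (hPle : ∀ s' s a, Plow s' s a ≤ Pup s' s a)
    (hPsum : ∀ s a, (∑ s', Plow s' s a) ≤ 1 ∧ 1 ≤ ∑ s', Pup s' s a)
    (s : S) (a : A) : (ambiguitySet Plow Pup s a).Nonempty := by
  set L := ∑ s', Plow s' s a with hL
  set U := ∑ s', Pup s' s a with hU
  have hL1 : L ≤ 1 := (hPsum s a).1
  have hU1 : 1 ≤ U := (hPsum s a).2
  by_cases h : U = L
  · refine ⟨fun s' => Plow s' s a, ⟨fun s' => ⟨(hP01 s' s a).1,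
      le_trans (hPle s' s a) (hP01 s' s a).2, le_refl _, hPle s' s a⟩, ?_⟩⟩
    rw [← hL]; linarith
  · have hLU : L < U := lt_of_le_of_ne (le_trans hL1 hU1) fun e => h e.symm
    set t := (1 - L) / (U - L) with ht
    have ht0 : 0 ≤ t := div_nonneg (by linarith) (by linarith)
    have ht1 : t ≤ 1 := (div_le_one (by linarith)).2 (by linarith)
    refine ⟨fun s' => Plow s' s a + t * (Pup s' s a - Plow s' s a), ⟨fun s' => ?_, ?_⟩⟩
    · simp only
      have hd : 0 ≤ Pup s' s a - Plow s' s a := by linarith [hPle s' s a]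
      have h1 := (hP01 s' s a).1
      have h2 := (hP01 s' s a).2
      have : t * (Pup s' s a - Plow s' s a) ≤ 1 * (Pup s' s a - Plow s' s a) :=
        mul_le_mul_of_nonneg_right ht1 hd
      have : 0 ≤ t * (Pup s' s a - Plow s' s a) := mul_nonneg ht0 hd
      constructor; · linarith
      constructor; · nlinarith
      constructor; · linarith
      · nlinarith
    · have : ∑ s', (Plow s' s a + t * (Pup s' s a - Plow s' s a))
          = L + t * (U - L) := by
        rw [Finset.sum_add_distrib, ← Finset.mul_sum, Finset.sum_sub_distrib]
      rw [this, ht, div_mul_cancel₀]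
      · ring
      · linarith

lemma sum_le_sup' {S : Type*} [Fintype S] [Nonempty S] (p v : S → ℝ)
    (hp : ∀ s', 0 ≤ p s') (hsum : ∑ s', p s' = 1) :
    ∑ s', p s' * v s' ≤ Finset.univ.sup' Finset.univ_nonempty v := by
  set C := Finset.univ.sup' Finset.univ_nonempty v with hC
  calc ∑ s', p s' * v s' ≤ ∑ s', p s' * C :=
        Finset.sum_le_sum fun i _ =>
          mul_le_mul_of_nonneg_left (Finset.le_sup' v (Finset.mem_univ i)) (hp i)
    _ = C := by rw [← Finset.sum_mul, hsum, one_mul]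

lemma inf'_le_sum {S : Type*} [Fintype S] [Nonempty S] (p v : S → ℝ)
    (hp : ∀ s', 0 ≤ p s') (hsum : ∑ s', p s' = 1) :
    Finset.univ.inf' Finset.univ_nonempty v ≤ ∑ s', p s' * v s' := by
  set c := Finset.univ.inf' Finset.univ_nonempty v with hc
  calc c = ∑ s', p s' * c := by rw [← Finset.sum_mul, hsum, one_mul]
    _ ≤ ∑ s', p s' * v s' :=
        Finset.sum_le_sum fun i _ =>
          mul_le_mul_of_nonneg_left (Finset.inf'_le v (Finset.mem_univ i)) (hp i)

lemma amb_bddBelow {S A : Type*} [Fintype S] [Nonempty S] (Plow Pup : S → S → A → ℝ)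
    (s : S) (a : A) (v : S → ℝ) :
    BddBelow ((fun p : S → ℝ => ∑ s', p s' * v s') '' ambiguitySet Plow Pup s a) := by
  refine ⟨Finset.univ.inf' Finset.univ_nonempty v, ?_⟩
  rintro x ⟨p, ⟨hp, hsum⟩, rfl⟩
  exact inf'_le_sum p v (fun s' => (hp s').1) hsum

lemma minExp_le_sum {S A : Type*} [Fintype S] [Nonempty S] (Plow Pup : S → S → A → ℝ)
    (s : S) (a : A) (v : S → ℝ) {p : S → ℝ} (hp : p ∈ ambiguitySet Plow Pup s a) :
    minExp Plow Pup s a v ≤ ∑ s', p s' * v s' :=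
  csInf_le (amb_bddBelow Plow Pup s a v) ⟨p, hp, rfl⟩

lemma minExp_le_add {S A : Type*} [Fintype S] [Nonempty S] (Plow Pup : S → S → A → ℝ)
    (s : S) (a : A) (v w : S → ℝ) (c : ℝ) (hvw : ∀ s', v s' ≤ w s' + c)
    (hne : (ambiguitySet Plow Pup s a).Nonempty) :
    minExp Plow Pup s a v ≤ minExp Plow Pup s a w + c := by
  have key : ∀ q ∈ ambiguitySet Plow Pup s a,
      minExp Plow Pup s a v - c ≤ ∑ s', q s' * w s' := by
    intro q hq
    have h1 := minExp_le_sum Plow Pup s a v hq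
    have h2 : ∑ s', q s' * v s' ≤ ∑ s', q s' * w s' + c := by
      have : ∑ s', q s' * v s' ≤ ∑ s', (q s' * w s' + q s' * c) := by
        refine Finset.sum_le_sum fun i _ => ?_
        have := mul_le_mul_of_nonneg_left (hvw i) (hq.1 i).1
        linarith [this]
      rw [Finset.sum_add_distrib, ← Finset.sum_mul, hq.2, one_mul] at this
      linarith
    linarith
  have : minExp Plow Pup s a v - c ≤ minExp Plow Pup s a w := by
    apply le_csInf (hne.image _)
    rintro b ⟨q, hq, rfl⟩
    exact key q hq
  linarith

/-- the value of any fixed policy is dominated by the pessimistic optimal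
value: a fixed point of v ↦ F̲(v,π) is bounded above by the fixed point of G̲. -/
theorem policy_value_le_optimal {S A : Type*} [Fintype S] [Nonempty S] [Nonempty A]
    (γ : ℝ) (hγ0 : 0 < γ) (hγ1 : γ < 1)
    (Plow Pup : S → S → A → ℝ)
    (hP01 : ∀ s' s a, 0 ≤ Plow s' s a ∧ Pup s' s a ≤ 1)
    (hPle : ∀ s' s a, Plow s' s a ≤ Pup s' s a)
    (hPsum : ∀ s a, (∑ s', Plow s' s a) ≤ 1 ∧ 1 ≤ ∑ s', Pup s' s a)
    (Rlow : S → A → ℝ) (hRbdd : ∀ s, BddAbove (Set.range fun a => Rlow s a))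
    (π : S → A)
    (Vpi : S → ℝ) (hVpi : (fun s => Fpess Plow Pup Rlow γ Vpi π s) = Vpi)
    (Vstar : S → ℝ) (hVstar : Gpess Plow Pup Rlow γ Vstar = Vstar) :
    ∀ s, Vpi s ≤ Vstar s := by
  have hne : ∀ (s : S) (a : A), (ambiguitySet Plow Pup s a).Nonempty :=
    amb_nonempty Plow Pup hP01 hPle hPsum
  set M := Finset.univ.sup' Finset.univ_nonempty (fun s => Vpi s - Vstar s) with hM
  have hMle : ∀ s, Vpi s - Vstar s ≤ M := fun s =>
    Finset.le_sup' (fun s => Vpi s - Vstar s) (Finset.mem_univ s)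
  obtain ⟨s0, -, hs0⟩ :=
    Finset.exists_mem_eq_sup' Finset.univ_nonempty (fun s => Vpi s - Vstar s)
  rw [← hM] at hs0
  have hbdd : ∀ s, BddAbove (Set.range fun a => Rlow s a + γ * minExp Plow Pup s a Vstar) := by
    intro s
    obtain ⟨B, hB⟩ := hRbdd s
    refine ⟨B + γ * Finset.univ.sup' Finset.univ_nonempty Vstar, ?_⟩
    rintro x ⟨a, rfl⟩
    have h1 : Rlow s a ≤ B := hB ⟨a, rfl⟩
    have h2 : minExp Plow Pup s a Vstar ≤ Finset.univ.sup' Finset.univ_nonempty Vstar := by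
      obtain ⟨p, hp⟩ := hne s a
      exact le_trans (minExp_le_sum Plow Pup s a Vstar hp)
        (sum_le_sup' p Vstar (fun s' => (hp.1 s').1) hp.2)
    have h3 := mul_le_mul_of_nonneg_left h2 hγ0.le
    simp only
    linarith
  have hFle : ∀ s, Rlow s (π s) + γ * minExp Plow Pup s (π s) Vstar ≤ Vstar s := by
    intro s
    calc Rlow s (π s) + γ * minExp Plow Pup s (π s) Vstar
        ≤ Gpess Plow Pup Rlow γ Vstar s := le_ciSup (hbdd s) (π s)
      _ = Vstar s := congrFun hVstar s
  have hMγ : M ≤ γ * M := by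
    have hfix : Rlow s0 (π s0) + γ * minExp Plow Pup s0 (π s0) Vpi = Vpi s0 :=
      congrFun hVpi s0
    have hmin := minExp_le_add Plow Pup s0 (π s0) Vpi Vstar M
      (fun s' => by linarith [hMle s']) (hne s0 (π s0))
    have h4 := hFle s0
    have h5 := mul_le_mul_of_nonneg_left hmin hγ0.le
    have h6 : M = Vpi s0 - Vstar s0 := hs0
    nlinarith
  have hM0 : M ≤ 0 := by nlinarith
  intro s
  linarith [hMle s]
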